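/- Let $L_1,\dots,L_{d+1}$ be affine lines over $\mathbb{F}_q$ in general position (no three concurrent, and pairwise distinct). Suppose for each $\nu$ with $1 \le \nu \le d+1$ we are given $\nu$ distinct $\mathbb{F}_q$-rational points on $L_{q_\nu} = L_\nu$ that avoid all pairwise intersection points $L_i \cap L_j$. If a polynomial $f \in \mathbb{F}_q[x,y]$ of total degree at most $d$ vanishes at all these $1 + 2 + \cdots + (d+1)$ points, then $f = 0$. -/

import Mathlib

open MvPolynomial

section AuxStmt2

variable {F : Type*} [Field F] {σ : Type*}

lemma aux_sub_hc (p : MvPolynomial σ F) (hp : p ≠ 0) :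
    p - homogeneousComponent p.totalDegree p = 0 ∨
      (p - homogeneousComponent p.totalDegree p).totalDegree < p.totalDegree := by
  classical
  set m := p.totalDegree with hm
  set p' := p - homogeneousComponent m p with hp'
  have hcoeff : ∀ d, d ∈ p'.support → Finsupp.degree d < m := by
    intro d hd
    have h1 : coeff d p' = coeff d p - if Finsupp.degree d = m then coeff d p else 0 := by
      simp [hp', coeff_homogeneousComponent]
    have hne : coeff d p' ≠ 0 := mem_support_iff.1 hd
    by_cases hdm : Finsupp.degree d = m
    · simp [hdm] at h1; exact absurd h1 hne
    · have hle : Finsupp.degree d ≤ m := by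
        have hps : coeff d p ≠ 0 := by
          intro h0; simp [h0] at h1; exact hne h1
        have := le_totalDegree (p := p) (s := d) (mem_support_iff.2 hps)
        simpa [Finsupp.degree_apply, Finsupp.sum] using this
      exact lt_of_le_of_ne hle hdm
  by_cases h0 : p' = 0
  · exact Or.inl h0
  · right
    rcases Nat.eq_zero_or_pos m with hm0 | hmpos
    · exfalso
      obtain ⟨d, hd⟩ := support_nonempty.2 h0
      have := hcoeff d hd
      omega
    · rw [totalDegree]
      rw [Finset.sup_lt_iff (by exact hmpos)]
      intro d hd
      have := hcoeff d hd
      simpa [Finsupp.degree_apply, Finsupp.sum] using this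

lemma aux_hc_top_ne (p : MvPolynomial σ F) (hp : p ≠ 0) :
    homogeneousComponent p.totalDegree p ≠ 0 := by
  classical
  obtain ⟨d, hd, hsup⟩ := Finset.exists_mem_eq_sup p.support (support_nonempty.2 hp)
    (fun s => s.sum fun _ e => e)
  intro h
  have hdd : Finsupp.degree d = p.totalDegree := by
    rw [totalDegree, hsup]; simp [Finsupp.degree_apply, Finsupp.sum]
  have : coeff d (homogeneousComponent p.totalDegree p) = coeff d p := by
    rw [coeff_homogeneousComponent, if_pos hdd]
  rw [h] at this
  exact mem_support_iff.1 hd this.symm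

lemma aux_tdeg_mul (p q : MvPolynomial σ F) (hp : p ≠ 0) (hq : q ≠ 0) :
    (p * q).totalDegree = p.totalDegree + q.totalDegree := by
  classical
  refine le_antisymm (totalDegree_mul p q) ?_
  have hm : p.totalDegree = p.totalDegree := rfl
  obtain ⟨m, hm⟩ : ∃ m, p.totalDegree = m := ⟨_, rfl⟩
  obtain ⟨n, hn⟩ : ∃ n, q.totalDegree = n := ⟨_, rfl⟩
  rw [hm, hn]
  have hpm : homogeneousComponent p.totalDegree p = homogeneousComponent m p := by rw [hm]
  have hqn : homogeneousComponent q.totalDegree q = homogeneousComponent n q := by rw [hn]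
  by_contra hlt
  push_neg at hlt
  have key : homogeneousComponent (m + n) (p * q) = 0 :=
    homogeneousComponent_eq_zero _ _ hlt
  have pm := homogeneousComponent m p
  have qn := homogeneousComponent n q
  have hsplit : p * q = homogeneousComponent m p * homogeneousComponent n q +
      (homogeneousComponent m p * (q - homogeneousComponent n q) +
        (p - homogeneousComponent m p) * q) := by ring
  have h1 : homogeneousComponent (m + n) (homogeneousComponent m p * homogeneousComponent n q) =
      homogeneousComponent m p * homogeneousComponent n q := by
    have : homogeneousComponent m p * homogeneousComponent n q ∈ homogeneousSubmodule σ F (m + n) := by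
      rw [mem_homogeneousSubmodule]
      exact (homogeneousComponent_isHomogeneous m p).mul
        (homogeneousComponent_isHomogeneous n q)
    rw [homogeneousComponent_of_mem this, if_pos rfl]
  have h2 : homogeneousComponent (m + n) (homogeneousComponent m p * (q - homogeneousComponent n q)) = 0 := by
    rcases aux_sub_hc q hq with h | h
    · rw [hqn] at h; rw [h, mul_zero, map_zero]
    · rw [hqn, hn] at h
      apply homogeneousComponent_eq_zero
      have hb := (homogeneousComponent_isHomogeneous m p).totalDegree_le
      have ha := totalDegree_mul (homogeneousComponent m p) (q - homogeneousComponent n q)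
      omega
  have h3 : homogeneousComponent (m + n) ((p - homogeneousComponent m p) * q) = 0 := by
    rcases aux_sub_hc p hp with h | h
    · rw [hpm] at h; rw [h, zero_mul, map_zero]
    · rw [hpm, hm] at h
      apply homogeneousComponent_eq_zero
      have ha := totalDegree_mul (p - homogeneousComponent m p) q
      omega
  rw [hsplit, map_add, map_add, h1, h2, h3] at key
  simp only [add_zero] at key
  rw [← hpm, ← hqn] at key
  exact mul_ne_zero (aux_hc_top_ne p hp) (aux_hc_top_ne q hq) key


lemma aux_natDegree_aeval_le (u : Fin 2 → Polynomial F) (hu : ∀ i, (u i).natDegree ≤ 1)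
    (f : MvPolynomial (Fin 2) F) : (aeval u f).natDegree ≤ f.totalDegree := by
  classical
  rw [aeval_def, eval₂_eq']
  refine (Polynomial.natDegree_sum_le _ _).trans ?_
  rw [Finset.fold_max_le]
  constructor
  · exact Nat.zero_le _
  intro d hd
  refine le_trans (Polynomial.natDegree_mul_le) ?_
  simp only [Polynomial.algebraMap_eq, Polynomial.natDegree_C, zero_add]
  refine le_trans (Polynomial.natDegree_prod_le _ _) ?_
  refine le_trans (Finset.sum_le_sum (fun i _ => (Polynomial.natDegree_pow_le).trans
    (by exact Nat.mul_le_mul_left (d i) (hu i)))) ?_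
  simp only [Nat.mul_one]
  refine le_trans (le_of_eq ?_) (le_totalDegree hd)
  rw [Finsupp.sum_fintype]
  intro i; rfl

lemma aux_dvd_sub_aeval (l : MvPolynomial (Fin 2) F) (u : Fin 2 → Polynomial F)
    (w : MvPolynomial (Fin 2) F)
    (h : ∀ i, l ∣ X i - Polynomial.aeval w (u i)) (f : MvPolynomial (Fin 2) F) :
    l ∣ f - Polynomial.aeval w (aeval u f) := by
  induction f using MvPolynomial.induction_on with
  | C a => simp
  | add p q hp hq =>
      have : p + q - Polynomial.aeval w (aeval u (p + q)) =
          (p - Polynomial.aeval w (aeval u p)) + (q - Polynomial.aeval w (aeval u q)) := by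
        rw [map_add, map_add]; ring
      rw [this]; exact dvd_add hp hq
  | mul_X p i hp =>
      have : p * X i - Polynomial.aeval w (aeval u (p * X i)) =
          (p - Polynomial.aeval w (aeval u p)) * X i +
            Polynomial.aeval w (aeval u p) * (X i - Polynomial.aeval w (u i)) := by
        rw [map_mul, map_mul, aeval_X]; ring
      rw [this]
      exact dvd_add (hp.mul_right _) ((h i).mul_left _)

lemma aux_eval_aeval' (u : Fin 2 → Polynomial F) (t : F) (f : MvPolynomial (Fin 2) F) :
    (aeval u f).eval t = eval (fun i => (u i).eval t) f := by
  induction f using MvPolynomial.induction_on with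
  | C a => simp
  | add p q hp hq => simp [hp, hq]
  | mul_X p i hp => simp [hp]

lemma aux_line_dvd (n : ℕ) (a b c : F) (hab : (a, b) ≠ (0, 0))
    (p : Fin (n + 1) → F × F) (hinj : Function.Injective p)
    (hon : ∀ k, a * (p k).1 + b * (p k).2 + c = 0)
    (f : MvPolynomial (Fin 2) F) (hf : f.totalDegree ≤ n)
    (hz : ∀ k, eval ![(p k).1, (p k).2] f = 0) :
    (C a * X 0 + C b * X 1 + C c : MvPolynomial (Fin 2) F) ∣ f := by
  by_cases hb : b ≠ 0
  · -- parametrize by x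
    set u : Fin 2 → Polynomial F :=
      ![Polynomial.X, Polynomial.C (-a/b) * Polynomial.X + Polynomial.C (-c/b)] with hu
    have hu0 : u 0 = Polynomial.X := rfl
    have hu1 : u 1 = Polynomial.C (-a/b) * Polynomial.X + Polynomial.C (-c/b) := rfl
    have hb1 : (C b : MvPolynomial (Fin 2) F) * C b⁻¹ = 1 := by
      rw [← C_mul, mul_inv_cancel₀ hb, C_1]
    have hdvd1 : ∀ i, (C a * X 0 + C b * X 1 + C c : MvPolynomial (Fin 2) F) ∣
        X i - Polynomial.aeval (X 0 : MvPolynomial (Fin 2) F) (u i) := by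
      intro i
      fin_cases i
      · show (C a * X 0 + C b * X 1 + C c : MvPolynomial (Fin 2) F) ∣
            X 0 - Polynomial.aeval (X 0 : MvPolynomial (Fin 2) F) Polynomial.X
        simp
      · show (C a * X 0 + C b * X 1 + C c : MvPolynomial (Fin 2) F) ∣
            X 1 - Polynomial.aeval (X 0 : MvPolynomial (Fin 2) F)
              (Polynomial.C (-a/b) * Polynomial.X + Polynomial.C (-c/b))
        refine ⟨C b⁻¹, ?_⟩
        simp only [map_add, map_mul, Polynomial.aeval_C, Polynomial.aeval_X]
        rw [show algebraMap F (MvPolynomial (Fin 2) F) = C from rfl]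
        simp only [div_eq_mul_inv, neg_mul, map_neg, map_mul]
        linear_combination (-(X 1 : MvPolynomial (Fin 2) F)) * hb1
    have hr0 : aeval u f = 0 := by
      apply Polynomial.eq_zero_of_natDegree_lt_card_of_eval_eq_zero _
        (f := fun k => (p k).1) ?_ ?_ ?_
      · intro k l hkl
        have hkl' : (p k).1 = (p l).1 := hkl
        apply hinj
        have h2 : b * (p k).2 = b * (p l).2 := by
          linear_combination (hon k) - (hon l) - a * hkl'
        exact Prod.ext hkl' (mul_left_cancel₀ hb h2)
      · intro k
        rw [aux_eval_aeval']
        have hyval : ∀ i : Fin 2, (u i).eval (p k).1 = ![(p k).1, (p k).2] i := by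
          intro i
          fin_cases i
          · show Polynomial.eval (p k).1 Polynomial.X = (p k).1
            simp
          · show Polynomial.eval (p k).1
                (Polynomial.C (-a/b) * Polynomial.X + Polynomial.C (-c/b)) = (p k).2
            simp only [Polynomial.eval_add, Polynomial.eval_mul, Polynomial.eval_C,
              Polynomial.eval_X]
            have hy : (p k).2 = (-a * (p k).1 - c) / b := by
              rw [eq_div_iff hb]; linear_combination hon k
            rw [hy]; ring
        rw [show (fun i => (u i).eval (p k).1) = ![(p k).1, (p k).2] from funext hyval]
        exact hz k
      · calc (aeval u f).natDegree ≤ f.totalDegree := by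
              apply aux_natDegree_aeval_le
              intro i; fin_cases i
              · show (Polynomial.X : Polynomial F).natDegree ≤ 1
                simp
              · show (Polynomial.C (-a/b) * Polynomial.X + Polynomial.C (-c/b)).natDegree ≤ 1
                refine le_trans (Polynomial.natDegree_add_le _ _) ?_
                simp only [Polynomial.natDegree_C]
                refine max_le (le_trans (Polynomial.natDegree_C_mul_le _ _) (by simp)) (by simp)
          _ < Fintype.card (Fin (n + 1)) := by simpa using Nat.lt_succ_of_le hf
    have := aux_dvd_sub_aeval _ u (X 0) hdvd1 f
    rw [hr0] at this
    simpa using this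
  · -- b = 0, a ≠ 0, vertical line, parametrize by y
    push_neg at hb
    subst hb
    have ha : a ≠ 0 := by
      intro h; exact hab (by rw [h])
    set u : Fin 2 → Polynomial F := ![Polynomial.C (-c/a), Polynomial.X] with hu
    have hu0 : u 0 = Polynomial.C (-c/a) := rfl
    have hu1 : u 1 = Polynomial.X := rfl
    have ha1 : (C a : MvPolynomial (Fin 2) F) * C a⁻¹ = 1 := by
      rw [← C_mul, mul_inv_cancel₀ ha, C_1]
    have hdvd1 : ∀ i, (C a * X 0 + C 0 * X 1 + C c : MvPolynomial (Fin 2) F) ∣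
        X i - Polynomial.aeval (X 1 : MvPolynomial (Fin 2) F) (u i) := by
      intro i
      fin_cases i
      · show (C a * X 0 + C 0 * X 1 + C c : MvPolynomial (Fin 2) F) ∣
            X 0 - Polynomial.aeval (X 1 : MvPolynomial (Fin 2) F) (Polynomial.C (-c/a))
        refine ⟨C a⁻¹, ?_⟩
        simp only [Polynomial.aeval_C]
        rw [show algebraMap F (MvPolynomial (Fin 2) F) = C from rfl]
        simp only [div_eq_mul_inv, neg_mul, map_neg, map_mul, map_zero]
        linear_combination (-(X 0 : MvPolynomial (Fin 2) F)) * ha1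
      · show (C a * X 0 + C 0 * X 1 + C c : MvPolynomial (Fin 2) F) ∣
            X 1 - Polynomial.aeval (X 1 : MvPolynomial (Fin 2) F) Polynomial.X
        simp
    have hr0 : aeval u f = 0 := by
      apply Polynomial.eq_zero_of_natDegree_lt_card_of_eval_eq_zero _
        (f := fun k => (p k).2) ?_ ?_ ?_
      · intro k l hkl
        have hkl' : (p k).2 = (p l).2 := hkl
        apply hinj
        have h1 : a * (p k).1 = a * (p l).1 := by
          linear_combination (hon k) - (hon l)
        exact Prod.ext (mul_left_cancel₀ ha h1) hkl'
      · intro k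
        rw [aux_eval_aeval']
        have hyval : ∀ i : Fin 2, (u i).eval (p k).2 = ![(p k).1, (p k).2] i := by
          intro i
          fin_cases i
          · show Polynomial.eval (p k).2 (Polynomial.C (-c/a)) = (p k).1
            simp only [Polynomial.eval_C]
            have hx : (p k).1 = -c / a := by
              rw [eq_div_iff ha]; linear_combination hon k
            exact hx.symm
          · show Polynomial.eval (p k).2 Polynomial.X = (p k).2
            simp
        rw [show (fun i => (u i).eval (p k).2) = ![(p k).1, (p k).2] from funext hyval]
        exact hz k
      · calc (aeval u f).natDegree ≤ f.totalDegree := by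
              apply aux_natDegree_aeval_le
              intro i; fin_cases i
              · show (Polynomial.C (-c/a) : Polynomial F).natDegree ≤ 1
                simp
              · show (Polynomial.X : Polynomial F).natDegree ≤ 1
                simp
          _ < Fintype.card (Fin (n + 1)) := by simpa using Nat.lt_succ_of_le hf
    have := aux_dvd_sub_aeval _ u (X 1) hdvd1 f
    rw [hr0] at this
    simpa using this


lemma aux_linear_totalDegree (a b c : F) (hab : (a, b) ≠ (0, 0)) :
    (C a * X 0 + C b * X 1 + C c : MvPolynomial (Fin 2) F).totalDegree = 1 := by
  classical
  refine le_antisymm ?_ ?_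
  · refine le_trans (totalDegree_add _ _) (max_le (le_trans (totalDegree_add _ _)
      (max_le ?_ ?_)) (by simp)) <;>
    exact (totalDegree_mul _ _).trans (by simp)
  · by_cases hbz : b = 0
    · have ha : a ≠ 0 := fun h => hab (by rw [h, hbz])
      have hc : coeff (Finsupp.single (0 : Fin 2) 1)
          (C a * X 0 + C b * X 1 + C c : MvPolynomial (Fin 2) F) = a := by
        simp [coeff_add, coeff_C_mul, coeff_X', coeff_C, Finsupp.single_eq_single_iff,
          Finsupp.single_eq_zero]
        exact fun h => absurd h.symm (by simp)
      have hmem : Finsupp.single (0 : Fin 2) 1 ∈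
          (C a * X 0 + C b * X 1 + C c : MvPolynomial (Fin 2) F).support :=
        mem_support_iff.2 (by rw [hc]; exact ha)
      have := le_totalDegree hmem
      simpa [Finsupp.sum_single_index] using this
    · have hc : coeff (Finsupp.single (1 : Fin 2) 1)
          (C a * X 0 + C b * X 1 + C c : MvPolynomial (Fin 2) F) = b := by
        simp [coeff_add, coeff_C_mul, coeff_X', coeff_C, Finsupp.single_eq_single_iff,
          Finsupp.single_eq_zero]
        exact fun h => absurd h.symm (by simp)
      have hmem : Finsupp.single (1 : Fin 2) 1 ∈
          (C a * X 0 + C b * X 1 + C c : MvPolynomial (Fin 2) F).support :=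
        mem_support_iff.2 (by rw [hc]; exact hbz)
      have := le_totalDegree hmem
      simpa [Finsupp.sum_single_index] using this

end AuxStmt2

/-- If `d+1` affine lines are in general position (pairwise distinct, no
three concurrent) and on the `ν`-th line we choose `ν` distinct rational points avoiding
all intersection points, then any polynomial of total degree at most `d` vanishing at all
these points is zero. -/
theorem stmt_2 {F : Type*} [Field F] (d : ℕ)
    (a b c : Fin (d + 1) → F) (hab : ∀ i, (a i, b i) ≠ (0, 0))
    (hdist : ∀ i j : Fin (d + 1), i ≠ j →
      {p : F × F | a i * p.1 + b i * p.2 + c i = 0} ≠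
        {p : F × F | a j * p.1 + b j * p.2 + c j = 0})
    (hgen : ∀ i j k : Fin (d + 1), i ≠ j → i ≠ k → j ≠ k →
      ¬∃ p : F × F, a i * p.1 + b i * p.2 + c i = 0 ∧
        a j * p.1 + b j * p.2 + c j = 0 ∧ a k * p.1 + b k * p.2 + c k = 0)
    (P : (ν : Fin (d + 1)) → Fin (ν.1 + 1) → F × F)
    (hPinj : ∀ ν, Function.Injective (P ν))
    (hPon : ∀ ν k, a ν * (P ν k).1 + b ν * (P ν k).2 + c ν = 0)
    (hPavoid : ∀ ν k j, j ≠ ν → a j * (P ν k).1 + b j * (P ν k).2 + c j ≠ 0)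
    (f : MvPolynomial (Fin 2) F) (hf : f.totalDegree ≤ d)
    (hz : ∀ ν k, MvPolynomial.eval ![(P ν k).1, (P ν k).2] f = 0) :
    f = 0 := by
  revert a b c hab hdist hgen P hPinj hPon hPavoid f hf hz
  induction d with
  | zero =>
    intro a b c hab hdist hgen P hPinj hPon hPavoid f hf hz
    obtain ⟨h, hfh⟩ := aux_line_dvd 0 (a 0) (b 0) (c 0) (hab 0) (P 0) (hPinj 0) (hPon 0) f hf (hz 0)
    by_cases h0 : h = 0
    · rw [hfh, h0, mul_zero]
    · exfalso
      have hl1 := aux_linear_totalDegree (a 0) (b 0) (c 0) (hab 0)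
      have hlne : (C (a 0) * X 0 + C (b 0) * X 1 + C (c 0) : MvPolynomial (Fin 2) F) ≠ 0 := by
        intro hE; rw [hE] at hl1; simp at hl1
      have hdeg := aux_tdeg_mul _ h hlne h0
      rw [← hfh, hl1] at hdeg
      omega
  | succ d ih =>
    intro a b c hab hdist hgen P hPinj hPon hPavoid f hf hz
    obtain ⟨h, hfh⟩ := aux_line_dvd (d + 1) (a (Fin.last (d + 1))) (b (Fin.last (d + 1)))
      (c (Fin.last (d + 1))) (hab (Fin.last (d + 1))) (P (Fin.last (d + 1)))
      (hPinj (Fin.last (d + 1))) (hPon (Fin.last (d + 1))) f hf (hz (Fin.last (d + 1)))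
    by_cases h0 : h = 0
    · rw [hfh, h0, mul_zero]
    · have hl1 := aux_linear_totalDegree (a (Fin.last (d + 1))) (b (Fin.last (d + 1)))
        (c (Fin.last (d + 1))) (hab (Fin.last (d + 1)))
      have hlne : (C (a (Fin.last (d + 1))) * X 0 + C (b (Fin.last (d + 1))) * X 1 +
          C (c (Fin.last (d + 1))) : MvPolynomial (Fin 2) F) ≠ 0 := by
        intro hE; rw [hE] at hl1; simp at hl1
      have hdeg := aux_tdeg_mul _ h hlne h0
      rw [← hfh, hl1] at hdeg
      have hhd : h.totalDegree ≤ d := by omega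
      have hz' : ∀ (ν : Fin (d + 1)) (k : Fin (ν.1 + 1)),
          eval ![(P ν.castSucc k).1, (P ν.castSucc k).2] h = 0 := by
        intro ν k
        have h1 := hz ν.castSucc k
        rw [hfh, map_mul] at h1
        have h2 : eval ![(P ν.castSucc k).1, (P ν.castSucc k).2]
            (C (a (Fin.last (d + 1))) * X 0 + C (b (Fin.last (d + 1))) * X 1 +
              C (c (Fin.last (d + 1))) : MvPolynomial (Fin 2) F) =
            a (Fin.last (d + 1)) * (P ν.castSucc k).1 +
              b (Fin.last (d + 1)) * (P ν.castSucc k).2 + c (Fin.last (d + 1)) := by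
          simp
        rw [h2] at h1
        have h3 := hPavoid ν.castSucc k (Fin.last (d + 1)) (Fin.castSucc_lt_last ν).ne'
        rcases mul_eq_zero.1 h1 with hE | hE
        · exact absurd hE h3
        · exact hE
      have hres := ih (fun i => a i.castSucc) (fun i => b i.castSucc) (fun i => c i.castSucc)
        (fun i => hab i.castSucc)
        (fun i j hij => hdist i.castSucc j.castSucc
          (fun hE => hij (Fin.castSucc_injective _ hE)))
        (fun i j k hij hik hjk => hgen i.castSucc j.castSucc k.castSucc
          (fun hE => hij (Fin.castSucc_injective _ hE))
          (fun hE => hik (Fin.castSucc_injective _ hE))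
          (fun hE => hjk (Fin.castSucc_injective _ hE)))
        (fun ν k => P ν.castSucc k) (fun ν => hPinj ν.castSucc) (fun ν k => hPon ν.castSucc k)
        (fun ν k j hj => hPavoid ν.castSucc k j.castSucc
          (fun hE => hj (Fin.castSucc_injective _ hE)))
        h hhd hz'
      rw [hfh, hres, mul_zero]
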